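/- Variational form of the classical KS statistic: for samples x_1,...,x_m and y_1,...,y_n, the supremum over all functions f: R → R of total variation at most 1 of |(1/m)∑_i f(x_i) - (1/n)∑_i f(y_i)| equals max_{z ∈ Z} |(1/m)∑_i 1{x_i <= z} - (1/n)∑_i 1{y_i <= z}|, where Z is the joined sample set. -/

import Mathlib

lemma ks_tele_ite (g : ℕ → ℝ) : ∀ (N r : ℕ), r ≤ N →
    ∑ j ∈ Finset.range N, (if r ≤ j then g (j+1) - g j else 0) = g N - g r := by
  intro N
  induction N with
  | zero => intro r hr; interval_cases r; simp
  | succ N ih =>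
    intro r hr
    rw [Finset.sum_range_succ]
    rcases Nat.lt_succ_iff_lt_or_eq.mp (Nat.lt_succ_of_le hr) with h | h
    · have hrN : r ≤ N := Nat.lt_succ_iff.mp h
      rw [ih r hrN, if_pos hrN]; ring
    · subst h
      rw [if_neg (by omega), Finset.sum_eq_zero, add_zero, sub_self]
      intro j hj
      rw [if_neg (by simp at hj; omega)]

lemma ks_indicator_evar (z₀ : ℝ) :
    eVariationOn (fun t => if t ≤ z₀ then (1:ℝ) else 0) Set.univ ≤ 1 := by
  apply iSup_le
  rintro ⟨N, u, hu, -⟩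
  set f : ℝ → ℝ := fun t => if t ≤ z₀ then (1:ℝ) else 0 with hf
  have h01 : ∀ t, 0 ≤ f t ∧ f t ≤ 1 := by
    intro t; simp only [hf]; split_ifs <;> norm_num
  have hanti : ∀ i j : ℕ, i ≤ j → f (u j) ≤ f (u i) := by
    intro i j hij
    simp only [hf]
    split_ifs with h1 h2
    · exact le_refl 1
    · exact absurd (le_trans (hu hij) h1) h2
    · norm_num
    · exact le_refl 0
  simp only
  have hed : ∀ i : ℕ, edist (f (u (i+1))) (f (u i))
      = ENNReal.ofReal (f (u i) - f (u (i+1))) := by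
    intro i
    rw [edist_dist, Real.dist_eq, abs_of_nonpos (by linarith [hanti i (i+1) (Nat.le_succ i)])]
    ring_nf
  calc ∑ i ∈ Finset.range N, edist (f (u (i + 1))) (f (u i))
      = ∑ i ∈ Finset.range N, ENNReal.ofReal (f (u i) - f (u (i+1))) := by
        exact Finset.sum_congr rfl fun i _ => hed i
    _ = ENNReal.ofReal (∑ i ∈ Finset.range N, (f (u i) - f (u (i+1)))) := by
        rw [ENNReal.ofReal_sum_of_nonneg]
        intro i _; linarith [hanti i (i+1) (Nat.le_succ i)]
    _ = ENNReal.ofReal (f (u 0) - f (u N)) := by rw [Finset.sum_range_sub' (fun i => f (u i))]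
    _ ≤ 1 := by
        rw [show (1 : ENNReal) = ENNReal.ofReal 1 by simp]
        apply ENNReal.ofReal_le_ofReal
        linarith [(h01 (u 0)).2, (h01 (u N)).1]

/-- Variational form of the classical KS statistic: the supremum of
`|(1/m)∑ f(x_i) - (1/n)∑ f(y_i)|` over all `f : ℝ → ℝ` of total variation at most `1`
is attained, and equals the maximum over the joined sample points `z` of
`|(1/m)∑ 1{x_i ≤ z} - (1/n)∑ 1{y_i ≤ z}|`. -/
theorem ks_variational_form (m n : ℕ) (hm : 0 < m) (hn : 0 < n)
    (x : Fin m → ℝ) (y : Fin n → ℝ) (Z : Finset ℝ)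
    (hZ : Z = Finset.image x Finset.univ ∪ Finset.image y Finset.univ)
    (hZne : Z.Nonempty) :
    IsGreatest
      {r : ℝ | ∃ f : ℝ → ℝ, eVariationOn f Set.univ ≤ 1 ∧
        r = |(1 / (m : ℝ)) * ∑ i, f (x i) - (1 / (n : ℝ)) * ∑ i, f (y i)|}
      (Z.sup' hZne fun z =>
        |(1 / (m : ℝ)) * ∑ i, (if x i ≤ z then (1 : ℝ) else 0) -
          (1 / (n : ℝ)) * ∑ i, (if y i ≤ z then (1 : ℝ) else 0)|) := by
  set F : ℝ → ℝ := fun z =>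
    |(1 / (m : ℝ)) * ∑ i, (if x i ≤ z then (1 : ℝ) else 0) -
      (1 / (n : ℝ)) * ∑ i, (if y i ≤ z then (1 : ℝ) else 0)| with hFdef
  constructor
  · -- membership: the maximizing indicator function
    obtain ⟨z₀, hz₀Z, hz₀⟩ := Finset.exists_mem_eq_sup' hZne F
    exact ⟨fun t => if t ≤ z₀ then (1:ℝ) else 0, ks_indicator_evar z₀, hz₀⟩
  · -- upper bound
    rintro r ⟨f, hf, rfl⟩
    have hK : 0 < Z.card := Finset.card_pos.mpr hZne
    have hK1 : Z.card - 1 < Z.card := Nat.sub_lt hK one_pos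
    set e : Fin Z.card ≃o {z // z ∈ Z} := Z.orderIsoOfFin rfl with he
    set u : ℕ → ℝ := fun j =>
      (e ⟨min j (Z.card - 1), lt_of_le_of_lt (min_le_right _ _) hK1⟩ : ℝ) with hudef
    have hu : Monotone u := by
      intro i j hij
      simp only [hudef]
      exact Subtype.coe_le_coe.mpr (e.monotone (by
        rw [Fin.mk_le_mk]; exact min_le_min hij le_rfl))
    have huZ : ∀ j, u j ∈ Z := fun j => (e _).2
    have claimA : ∀ t ∈ Z, f t = f (u (Z.card - 1)) -
        ∑ j ∈ Finset.range (Z.card - 1),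
          (if t ≤ u j then (f (u (j+1)) - f (u j)) else 0) := by
      intro t ht
      set r : ℕ := ((e.symm ⟨t, ht⟩ : Fin Z.card) : ℕ) with hr
      have hrK : r < Z.card := (e.symm ⟨t, ht⟩).2
      have hr1 : r ≤ Z.card - 1 := Nat.le_pred_of_lt hrK
      have hur : u r = t := by
        simp only [hudef]
        have hmin : (⟨min r (Z.card - 1), lt_of_le_of_lt (min_le_right _ _) hK1⟩ : Fin Z.card)
            = e.symm ⟨t, ht⟩ := by
          apply Fin.ext; simp [min_eq_left hr1, hr]; exact hr1
        rw [hmin, e.apply_symm_apply]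
      have hcond : ∀ j, j < Z.card - 1 → (t ≤ u j ↔ r ≤ j) := by
        intro j hj
        rw [← hur]
        simp only [hudef]
        rw [Subtype.coe_le_coe, e.le_iff_le, Fin.mk_le_mk,
          min_eq_left hr1, min_eq_left (le_of_lt hj)]
      have hsum : ∑ j ∈ Finset.range (Z.card - 1),
            (if t ≤ u j then (f (u (j+1)) - f (u j)) else 0)
          = ∑ j ∈ Finset.range (Z.card - 1),
            (if r ≤ j then ((fun k => f (u k)) (j+1) - (fun k => f (u k)) j) else 0) := by
        refine Finset.sum_congr rfl fun j hj => ?_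
        rw [Finset.mem_range] at hj
        simp only [if_congr (hcond j hj) rfl rfl]
      rw [hsum, ks_tele_ite (fun k => f (u k)) (Z.card - 1) r hr1]
      rw [hur]; ring
    have expand : ∀ (N : ℕ), 0 < N → ∀ (w : Fin N → ℝ), (∀ i, w i ∈ Z) →
        (1/(N:ℝ)) * ∑ i, f (w i)
          = f (u (Z.card - 1)) - ∑ j ∈ Finset.range (Z.card - 1),
              (f (u (j+1)) - f (u j)) * ((1/(N:ℝ)) * ∑ i, (if w i ≤ u j then (1:ℝ) else 0)) := by
      intro N hN w hw
      have hNne : (N:ℝ) ≠ 0 := Nat.cast_ne_zero.mpr hN.ne'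
      calc (1/(N:ℝ)) * ∑ i, f (w i)
          = (1/(N:ℝ)) * ∑ i, (f (u (Z.card - 1)) - ∑ j ∈ Finset.range (Z.card - 1),
              (if w i ≤ u j then (f (u (j+1)) - f (u j)) else 0)) := by
            congr 1; exact Finset.sum_congr rfl fun i _ => claimA (w i) (hw i)
        _ = (1/(N:ℝ)) * ((N:ℝ) * f (u (Z.card - 1)) - ∑ j ∈ Finset.range (Z.card - 1),
              ∑ i, (if w i ≤ u j then (f (u (j+1)) - f (u j)) else 0)) := by
            rw [Finset.sum_sub_distrib, Finset.sum_const, Finset.card_univ, Fintype.card_fin,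
              nsmul_eq_mul, Finset.sum_comm]
        _ = f (u (Z.card - 1)) - ∑ j ∈ Finset.range (Z.card - 1),
              (f (u (j+1)) - f (u j)) * ((1/(N:ℝ)) * ∑ i, (if w i ≤ u j then (1:ℝ) else 0)) := by
            rw [mul_sub, Finset.mul_sum]
            congr 1
            · field_simp
            · refine Finset.sum_congr rfl fun j _ => ?_
              have : ∑ i, (if w i ≤ u j then (f (u (j+1)) - f (u j)) else 0)
                  = (f (u (j+1)) - f (u j)) * ∑ i, (if w i ≤ u j then (1:ℝ) else 0) := by
                rw [Finset.mul_sum]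
                exact Finset.sum_congr rfl fun i _ => by split_ifs <;> ring
              rw [this]; ring
    have hxmem : ∀ i, x i ∈ Z := fun i => by
      rw [hZ]; exact Finset.mem_union_left _ (Finset.mem_image_of_mem x (Finset.mem_univ i))
    have hymem : ∀ i, y i ∈ Z := fun i => by
      rw [hZ]; exact Finset.mem_union_right _ (Finset.mem_image_of_mem y (Finset.mem_univ i))
    set Δ : ℕ → ℝ := fun j => f (u (j+1)) - f (u j) with hΔ
    set S : ℕ → ℝ := fun j => (1/(m:ℝ)) * ∑ i, (if x i ≤ u j then (1:ℝ) else 0)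
        - (1/(n:ℝ)) * ∑ i, (if y i ≤ u j then (1:ℝ) else 0) with hS
    have hD : (1/(m:ℝ)) * ∑ i, f (x i) - (1/(n:ℝ)) * ∑ i, f (y i)
        = -∑ j ∈ Finset.range (Z.card - 1), Δ j * S j := by
      rw [expand m hm x hxmem, expand n hn y hymem, sub_sub_sub_cancel_left,
        ← Finset.sum_sub_distrib, ← Finset.sum_neg_distrib]
      refine Finset.sum_congr rfl fun j _ => ?_
      simp only [hΔ, hS]; ring
    have hvar : ∑ j ∈ Finset.range (Z.card - 1), |Δ j| ≤ 1 := by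
      have h1 := eVariationOn.sum_le (f := f) (n := Z.card - 1) hu (fun i => Set.mem_univ (u i))
      have h2 : ∑ j ∈ Finset.range (Z.card - 1), edist (f (u (j+1))) (f (u j))
          = ENNReal.ofReal (∑ j ∈ Finset.range (Z.card - 1), |Δ j|) := by
        rw [ENNReal.ofReal_sum_of_nonneg (fun i _ => abs_nonneg _)]
        exact Finset.sum_congr rfl fun j _ => by
          rw [edist_dist, Real.dist_eq]
      rw [h2] at h1
      exact ENNReal.ofReal_le_one.mp (h1.trans hf)
    set M : ℝ := Z.sup' hZne F with hM
    have hSM : ∀ j, |S j| ≤ M := fun j => Finset.le_sup' F (huZ j)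
    have hM0 : 0 ≤ M := by
      obtain ⟨z₁, hz₁⟩ := hZne
      exact le_trans (abs_nonneg _) (Finset.le_sup' F hz₁)
    calc |(1/(m:ℝ)) * ∑ i, f (x i) - (1/(n:ℝ)) * ∑ i, f (y i)|
        = |∑ j ∈ Finset.range (Z.card - 1), Δ j * S j| := by rw [hD, abs_neg]
      _ ≤ ∑ j ∈ Finset.range (Z.card - 1), |Δ j * S j| :=
          Finset.abs_sum_le_sum_abs _ _
      _ ≤ ∑ j ∈ Finset.range (Z.card - 1), |Δ j| * M := by
          refine Finset.sum_le_sum fun j _ => ?_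
          rw [abs_mul]
          exact mul_le_mul_of_nonneg_left (hSM j) (abs_nonneg _)
      _ = (∑ j ∈ Finset.range (Z.card - 1), |Δ j|) * M := (Finset.sum_mul _ _ _).symm
      _ ≤ 1 * M := mul_le_mul_of_nonneg_right hvar hM0
      _ = M := one_mul M
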